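/- For the Gaussian white noise posterior with prior variances λ_i = τ·i^{-1-2α} (τ > 0 fixed), the posterior mean θ̂_i = nλ_i X_i/(1 + nλ_i) satisfies the variance identity ∑_i Var_θ(θ̂_i) = ∑_i (nλ_i/(1+nλ_i))² / n, and this quantity is bounded above by ∑_i 1/(i^{1+2α}·τ^{-1} + n) ≤ C(α, τ)·n^{-2α/(1+2α)}. -/

import Mathlib

open Finset

private lemma mvt_rpow (β : ℝ) (hβ : 1 < β) (x : ℝ) (hx : 1 ≤ x) :
    (β - 1) * (x + 1) ^ (-β) ≤ x ^ (1 - β) - (x + 1) ^ (1 - β) := by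
  have hx0 : (0:ℝ) < x := by linarith
  obtain ⟨c, hc, hderiv⟩ := exists_hasDerivAt_eq_slope (fun y => y ^ (1 - β))
    (fun y => (1 - β) * y ^ (1 - β - 1)) (by linarith : x < x + 1)
    (ContinuousOn.rpow_const continuousOn_id fun y hy => Or.inl (by
      have : 0 < y := lt_of_lt_of_le hx0 hy.1; exact this.ne'))
    (fun y hy => Real.hasDerivAt_rpow_const (Or.inl (by
      have : 0 < y := lt_of_le_of_lt hx0.le (by exact_mod_cast hy.1); exact this.ne')))
  have hc0 : 0 < c := lt_trans hx0 hc.1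
  have key : x ^ (1 - β) - (x + 1) ^ (1 - β) = (β - 1) * c ^ (-β) := by
    have h1 : (1:ℝ) - β - 1 = -β := by ring
    have h2 : x + 1 - x = 1 := by ring
    rw [h1, h2, div_one] at hderiv
    linarith [hderiv]
  rw [key]
  have : (x + 1) ^ (-β) ≤ c ^ (-β) :=
    Real.rpow_le_rpow_of_nonpos hc0 hc.2.le (by linarith)
  nlinarith [this, sub_pos.mpr hβ]

private lemma base_summable (β : ℝ) (hβ : 1 < β) :
    Summable fun i : ℕ => ((i : ℝ) + 1) ^ (-β) := by
  have h := (Real.summable_one_div_nat_rpow (p := β)).2 hβ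
  have h2 := (summable_nat_add_iff 1).2 h
  refine h2.congr fun i => ?_
  rw [Real.rpow_neg (by positivity), one_div]
  push_cast
  ring_nf

private lemma tail_bound (β : ℝ) (hβ : 1 < β) (N : ℕ) (hN : 1 ≤ N) :
    ∑' i : ℕ, ((i : ℝ) + N + 1) ^ (-β) ≤ (N : ℝ) ^ (1 - β) / (β - 1) := by
  have hβ1 : (0:ℝ) < β - 1 := by linarith
  have h0 : ∀ i : ℕ, (0:ℝ) ≤ ((i : ℝ) + N + 1) ^ (-β) := fun i => by positivity
  have key : ∑' i : ℕ, (β - 1) * ((i : ℝ) + N + 1) ^ (-β) ≤ (N : ℝ) ^ (1 - β) := by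
    apply Real.tsum_le_of_sum_range_le (fun i => by positivity)
    intro m
    have step : ∀ i ∈ range m, (β - 1) * ((i : ℝ) + N + 1) ^ (-β)
        ≤ ((N : ℝ) + i) ^ (1 - β) - ((N : ℝ) + (i + 1)) ^ (1 - β) := by
      intro i _
      have h := mvt_rpow β hβ ((N : ℝ) + i) (by
        have : (1:ℝ) ≤ (N : ℝ) := by exact_mod_cast hN
        have : (0:ℝ) ≤ (i : ℝ) := Nat.cast_nonneg i
        linarith)
      have e1 : (N : ℝ) + i + 1 = (i : ℝ) + N + 1 := by ring
      have e2 : (N : ℝ) + (i + 1) = (N : ℝ) + i + 1 := by ring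
      rw [e2, ← e1] at *
      linarith [h]
    calc ∑ i ∈ range m, (β - 1) * ((i : ℝ) + N + 1) ^ (-β)
        ≤ ∑ i ∈ range m, (((N : ℝ) + i) ^ (1 - β) - ((N : ℝ) + (i + 1)) ^ (1 - β)) :=
          Finset.sum_le_sum step
      _ = ((N : ℝ) + (0:ℕ)) ^ (1 - β) - ((N : ℝ) + m) ^ (1 - β) := by
          have h := Finset.sum_range_sub' (fun i : ℕ => ((N : ℝ) + i) ^ (1 - β)) m
          push_cast at h ⊢
          exact h
      _ ≤ (N : ℝ) ^ (1 - β) := by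
          have h1 : (0:ℝ) ≤ ((N : ℝ) + m) ^ (1 - β) := by positivity
          push_cast
          rw [add_zero]
          linarith
  rw [tsum_mul_left] at key
  rw [le_div_iff₀ hβ1]
  linarith [key]

/-- Posterior-mean variance bound in the Gaussian white noise model with prior variances
`λ_i = τ·i^{-1-2α}`: each coordinate of the posterior mean `θ̂_i = nλ_i X_i/(1+nλ_i)` has
variance `Var_θ(θ̂_i) = (nλ_i/(1+nλ_i))²/n`, the total variance `∑_i (nλ_i/(1+nλ_i))²/n`
is summable and bounded above by `∑_i 1/(i^{1+2α}·τ⁻¹ + n)`, which is itself at most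
`C(α, τ)·n^{-2α/(1+2α)}`.  (Coordinates are indexed from 1, realized as `i + 1`.) -/
theorem stmt_18 (α τ : ℝ) (hα : 0 < α) (hτ : 0 < τ) :
    ∃ C : ℝ, 0 < C ∧ ∀ n : ℕ, 1 ≤ n →
      ∀ lam : ℕ → ℝ, (∀ i : ℕ, lam i = τ * ((i : ℝ) + 1) ^ (-(1 + 2 * α))) →
        (Summable fun i : ℕ => ((n : ℝ) * lam i / (1 + n * lam i)) ^ 2 / n) ∧
        (∑' i : ℕ, ((n : ℝ) * lam i / (1 + n * lam i)) ^ 2 / n)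
          ≤ (∑' i : ℕ, 1 / (((i : ℝ) + 1) ^ (1 + 2 * α) * τ⁻¹ + n)) ∧
        (∑' i : ℕ, 1 / (((i : ℝ) + 1) ^ (1 + 2 * α) * τ⁻¹ + n))
          ≤ C * (n : ℝ) ^ (-(2 * α) / (1 + 2 * α)) := by
  have hβ : 1 < 1 + 2 * α := by linarith
  refine ⟨2 + τ / (2 * α), by positivity, ?_⟩
  intro n hn lam hlam
  have hn1 : (1:ℝ) ≤ n := by exact_mod_cast hn
  have hn0 : (0:ℝ) < n := by linarith
  set β : ℝ := 1 + 2 * α with hβdef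
  set g : ℕ → ℝ := fun i => 1 / (((i : ℝ) + 1) ^ β * τ⁻¹ + n) with hgdef
  have hApos : ∀ i : ℕ, (0:ℝ) < ((i : ℝ) + 1) ^ β * τ⁻¹ + n := fun i => by positivity
  have hLpos : ∀ i : ℕ, 0 < lam i := fun i => by rw [hlam i]; positivity
  have hDpos : ∀ i : ℕ, (0:ℝ) < 1 + n * lam i := fun i => by
    have := hLpos i; nlinarith
  have hLinv : ∀ i : ℕ, ((i : ℝ) + 1) ^ β * τ⁻¹ = (lam i)⁻¹ := by
    intro i
    rw [hlam i, mul_inv, Real.rpow_neg (by positivity), inv_inv, mul_comm]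
  have hg_eq : ∀ i : ℕ, g i = lam i / (1 + n * lam i) := by
    intro i
    have hL := hLpos i
    have hD := hDpos i
    rw [hgdef]
    simp only
    rw [hLinv i]
    rw [div_eq_div_iff (by rw [← hLinv i]; exact (hApos i).ne') hD.ne']
    field_simp
  have term_le : ∀ i : ℕ, ((n : ℝ) * lam i / (1 + n * lam i)) ^ 2 / n ≤ g i := by
    intro i
    have hL := hLpos i
    have hD := hDpos i
    rw [hg_eq i, div_pow, div_div, div_le_div_iff₀ (by positivity) hD]
    nlinarith [sq_nonneg ((n:ℝ) * lam i), mul_pos (mul_pos hn0 hL) hD]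
  have term_nonneg : ∀ i : ℕ, (0:ℝ) ≤ ((n : ℝ) * lam i / (1 + n * lam i)) ^ 2 / n :=
    fun i => by positivity
  have hg_nonneg : ∀ i : ℕ, 0 ≤ g i := fun i => le_of_lt (by
    rw [hgdef]; exact one_div_pos.mpr (hApos i))
  have hg_le : ∀ i : ℕ, g i ≤ τ * ((i : ℝ) + 1) ^ (-β) := by
    intro i
    rw [hg_eq i, ← hlam i]
    exact div_le_self (hLpos i).le (by nlinarith [hLpos i])
  have hg_summable : Summable g :=
    Summable.of_nonneg_of_le hg_nonneg hg_le ((base_summable β hβ).mul_left τ)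
  have hsum1 : Summable fun i : ℕ => ((n : ℝ) * lam i / (1 + n * lam i)) ^ 2 / n :=
    Summable.of_nonneg_of_le term_nonneg term_le hg_summable
  refine ⟨hsum1, Summable.tsum_le_tsum term_le hsum1 hg_summable, ?_⟩
  -- third part
  set r : ℝ := (n : ℝ) ^ (β⁻¹) with hrdef
  have hr1 : (1:ℝ) ≤ r := by
    rw [hrdef]
    calc (1:ℝ) = 1 ^ (β⁻¹) := (Real.one_rpow _).symm
      _ ≤ (n:ℝ) ^ (β⁻¹) := Real.rpow_le_rpow (by norm_num) hn1 (by positivity)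
  set N : ℕ := ⌈r⌉₊ with hNdef
  have hN1 : 1 ≤ N := Nat.one_le_ceil_iff.mpr (by linarith)
  have hNge : r ≤ (N : ℝ) := Nat.le_ceil r
  have hNle : (N : ℝ) ≤ 2 * r := by
    have := Nat.ceil_lt_add_one (by linarith : (0:ℝ) ≤ r)
    rw [hNdef]; linarith
  have hsplit := Summable.sum_add_tsum_nat_add N hg_summable
  have head : ∑ i ∈ range N, g i ≤ (N : ℝ) * (1 / n) := by
    have : ∀ i ∈ range N, g i ≤ 1 / (n : ℝ) := by
      intro i _
      rw [hgdef]
      exact one_div_le_one_div_of_le hn0 (le_add_of_nonneg_left (by positivity))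
    calc ∑ i ∈ range N, g i ≤ ∑ _i ∈ range N, (1 / (n:ℝ)) := Finset.sum_le_sum this
      _ = (N : ℝ) * (1 / n) := by rw [Finset.sum_const, card_range, nsmul_eq_mul]
  have tail_summable : Summable fun i : ℕ => ((i : ℝ) + N + 1) ^ (-β) := by
    refine ((summable_nat_add_iff N).2 (base_summable β hβ)).congr fun i => ?_
    push_cast; ring_nf
  have tail : ∑' i : ℕ, g (i + N) ≤ τ * ((N : ℝ) ^ (1 - β) / (β - 1)) := by
    have hle : ∀ i : ℕ, g (i + N) ≤ τ * ((i : ℝ) + N + 1) ^ (-β) := by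
      intro i
      have := hg_le (i + N)
      convert this using 3 <;> push_cast <;> ring
    calc ∑' i : ℕ, g (i + N)
        ≤ ∑' i : ℕ, τ * ((i : ℝ) + N + 1) ^ (-β) :=
          Summable.tsum_le_tsum hle ((summable_nat_add_iff N).2 hg_summable) (tail_summable.mul_left τ)
      _ = τ * ∑' i : ℕ, ((i : ℝ) + N + 1) ^ (-β) := tsum_mul_left
      _ ≤ τ * ((N : ℝ) ^ (1 - β) / (β - 1)) :=
          mul_le_mul_of_nonneg_left (tail_bound β hβ N hN1) hτ.le
  -- assemble
  have hrn : r / n = (n : ℝ) ^ (β⁻¹ - 1) := by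
    rw [hrdef, Real.rpow_sub hn0, Real.rpow_one]
  have hNpow : (N : ℝ) ^ (1 - β) ≤ (n : ℝ) ^ (β⁻¹ - 1) := by
    have h1 : (N : ℝ) ^ (1 - β) ≤ r ^ (1 - β) :=
      Real.rpow_le_rpow_of_nonpos (by linarith) hNge (by linarith)
    have h2 : r ^ (1 - β) = (n : ℝ) ^ (β⁻¹ - 1) := by
      rw [hrdef, ← Real.rpow_mul hn0.le]
      congr 1
      field_simp
    linarith [h1, h2.le, h2.ge]
  have hexp : β⁻¹ - 1 = -(2 * α) / (1 + 2 * α) := by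
    rw [hβdef]; field_simp; ring
  have hβ1 : β - 1 = 2 * α := by rw [hβdef]; ring
  have hpow_pos : (0:ℝ) < (n : ℝ) ^ (β⁻¹ - 1) := Real.rpow_pos_of_pos hn0 _
  calc (∑' i : ℕ, g i) = (∑ i ∈ range N, g i) + ∑' i : ℕ, g (i + N) := hsplit.symm
    _ ≤ (N : ℝ) * (1 / n) + τ * ((N : ℝ) ^ (1 - β) / (β - 1)) := add_le_add head tail
    _ ≤ 2 * r * (1 / n) + τ / (2 * α) * (n : ℝ) ^ (β⁻¹ - 1) := by
        refine add_le_add (mul_le_mul_of_nonneg_right hNle (by positivity)) ?_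
        rw [hβ1]
        have e : τ * ((N:ℝ) ^ (1 - β) / (2*α)) = τ/(2*α) * (N:ℝ)^(1-β) := by ring
        rw [e]
        gcongr
    _ = (2 + τ / (2 * α)) * (n : ℝ) ^ (β⁻¹ - 1) := by
        rw [mul_one_div, mul_div_assoc, hrn]; ring
    _ = (2 + τ / (2 * α)) * (n : ℝ) ^ (-(2 * α) / (1 + 2 * α)) := by rw [hexp]
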